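/- Let B_{K_1…K_k i_{k+1}…i_q} (for 0 ≤ k ≤ q) be families of coefficients, each skew-symmetric in K_1,…,K_k and in i_{k+1},…,i_q, related to families A_{K_1…K_k i_{k+1}…i_q} by B_{K_1…K_k i_{k+1}…i_q} = ∑_{l=k}^{q} C(q−k, q−l) · A_{K_1…K_l i_{l+1}…i_q} · y_{i_{k+1}}^{K_{k+1}} ⋯ y_{i_l}^{K_l}, alternated over i_{k+1},…,i_q. Then this triangular system inverts to A_{K_1…K_k i_{k+1}…i_q} = ∑_{l=k}^{q} (−1)^{l−k} C(q−k, q−l) · B_{K_1…K_l i_{l+1}…i_q} · y_{i_{k+1}}^{K_{k+1}} ⋯ y_{i_l}^{K_l}, alternated over i_{k+1},…,i_q. -/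

import Mathlib

open Finset

namespace CCIaux

variable {q n M : ℕ}

def Fixσ (q k : ℕ) : Finset (Equiv.Perm (Fin q)) :=
  univ.filter (fun σ => ∀ t : Fin q, (t : ℕ) < k → σ t = t)

def AgreeK (q M : ℕ) (k l : ℕ) (K : Fin q → Fin M) : Finset (Fin q → Fin M) :=
  univ.filter (fun K' => ∀ t : Fin q, ((t : ℕ) < k ∨ l ≤ (t : ℕ)) → K' t = K t)

def Itv (q k l : ℕ) : Finset (Fin q) :=
  univ.filter (fun t => k ≤ (t : ℕ) ∧ (t : ℕ) < l)

noncomputable def T (q n M : ℕ) (y : Fin n → Fin M → ℝ) (k l : ℕ)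
    (F : (Fin q → Fin M) → (Fin q → Fin n) → ℝ)
    (K : Fin q → Fin M) (i : Fin q → Fin n) : ℝ :=
  ∑ σ ∈ Fixσ q k, ((Equiv.Perm.sign σ : ℤ) : ℝ) *
    ∑ K' ∈ AgreeK q M k l K, F K' (i ∘ σ) * ∏ t ∈ Itv q k l, y (i (σ t)) (K' t)

lemma card_Fixσ (q k : ℕ) (hk : k ≤ q) : (Fixσ q k).card = (q - k).factorial := by
  have e1 : {σ : Equiv.Perm (Fin q) // ∀ t : Fin q, ¬ (k ≤ (t:ℕ)) → σ t = t} ≃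
      Equiv.Perm {t : Fin q // k ≤ (t:ℕ)} :=
    (Equiv.Perm.subtypeEquivSubtypePerm (fun t : Fin q => k ≤ (t:ℕ))).symm
  have e2 : {t : Fin q // k ≤ (t:ℕ)} ≃ Fin (q - k) :=
    { toFun := fun t => ⟨(t : ℕ) - k, by have := t.1.2; have := t.2; omega⟩
      invFun := fun j => ⟨⟨k + (j : ℕ), by have := j.2; omega⟩, by simp⟩
      left_inv := fun t => by
        have := t.2
        apply Subtype.ext; apply Fin.ext; simp; omega
      right_inv := fun j => by apply Fin.ext; simp }
  have : (Fixσ q k).card = Fintype.card {σ : Equiv.Perm (Fin q) // ∀ t : Fin q, ¬ (k ≤ (t:ℕ)) → σ t = t} := by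
    rw [Fintype.card_subtype]
    congr 1
    apply Finset.filter_congr
    intro σ _
    constructor <;> (intro h t ht; exact h t (by omega))
  rw [this, Fintype.card_congr (e1.trans (Equiv.permCongr e2)), Fintype.card_perm,
    Fintype.card_fin]


lemma AgreeK_self (q M k : ℕ) (K : Fin q → Fin M) : AgreeK q M k k K = {K} := by
  ext K'
  simp only [AgreeK, Finset.mem_filter, Finset.mem_univ, true_and, Finset.mem_singleton]
  constructor
  · intro h; funext t; exact h t (by omega)
  · intro h t _; rw [h]

lemma Itv_self (q k : ℕ) : Itv q k k = ∅ := by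
  ext t
  simp only [Itv, Finset.mem_filter, Finset.mem_univ, true_and, Finset.notMem_empty, iff_false]
  omega

lemma sum_swap_helper {α : Type*} [DecidableEq α] (A : Finset α) (s : Finset ℕ) (c : ℕ → ℝ)
    (g : ℕ → α → ℝ) (p : α → ℝ) :
    ∑ a ∈ A, (∑ m ∈ s, c m * g m a) * p a = ∑ m ∈ s, c m * ∑ a ∈ A, g m a * p a := by
  calc ∑ a ∈ A, (∑ m ∈ s, c m * g m a) * p a
      = ∑ a ∈ A, ∑ m ∈ s, c m * (g m a * p a) := by
        refine Finset.sum_congr rfl fun a _ => ?_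
        rw [Finset.sum_mul]
        exact Finset.sum_congr rfl fun m _ => by ring
    _ = ∑ m ∈ s, ∑ a ∈ A, c m * (g m a * p a) := Finset.sum_comm
    _ = ∑ m ∈ s, c m * ∑ a ∈ A, g m a * p a := by
        exact Finset.sum_congr rfl fun m _ => by rw [Finset.mul_sum]

lemma T_diag (q n M : ℕ) (y : Fin n → Fin M → ℝ) (k : ℕ)
    (F : (Fin q → Fin M) → (Fin q → Fin n) → ℝ)
    (hskew : ∀ (K : Fin q → Fin M) (i : Fin q → Fin n) (σ : Equiv.Perm (Fin q)),
      (∀ t : Fin q, (t : ℕ) < k → σ t = t) →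
        F K (i ∘ σ) = ((Equiv.Perm.sign σ : ℤ) : ℝ) * F K i)
    (K : Fin q → Fin M) (i : Fin q → Fin n) (hk : k ≤ q) :
    T q n M y k k F K i = ((q - k).factorial : ℝ) * F K i := by
  rw [T, AgreeK_self, Itv_self]
  simp only [Finset.sum_singleton, Finset.prod_empty, mul_one]
  have : ∀ σ ∈ Fixσ q k, ((Equiv.Perm.sign σ : ℤ) : ℝ) * F K (i ∘ σ) = F K i := by
    intro σ hσ
    simp only [Fixσ, Finset.mem_filter] at hσ
    rw [hskew K i σ hσ.2, ← mul_assoc, ← Int.cast_mul, ← Units.val_mul,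
      Int.units_mul_self, Units.val_one, Int.cast_one, one_mul]
  rw [Finset.sum_congr rfl this, Finset.sum_const, card_Fixσ q k hk, nsmul_eq_mul]

lemma T_sum (q n M : ℕ) (y : Fin n → Fin M → ℝ) (k l : ℕ) (s : Finset ℕ)
    (c : ℕ → ℝ) (G : ℕ → (Fin q → Fin M) → (Fin q → Fin n) → ℝ)
    (K : Fin q → Fin M) (i : Fin q → Fin n) :
    T q n M y k l (fun K' j => ∑ m ∈ s, c m * G m K' j) K i
      = ∑ m ∈ s, c m * T q n M y k l (G m) K i := by
  rw [T]
  calc ∑ σ ∈ Fixσ q k, ((Equiv.Perm.sign σ : ℤ) : ℝ) *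
        ∑ K' ∈ AgreeK q M k l K, (∑ m ∈ s, c m * G m K' (i ∘ σ)) *
          ∏ t ∈ Itv q k l, y (i (σ t)) (K' t)
      = ∑ σ ∈ Fixσ q k, ∑ m ∈ s, c m * (((Equiv.Perm.sign σ : ℤ) : ℝ) *
          ∑ K' ∈ AgreeK q M k l K, G m K' (i ∘ σ) * ∏ t ∈ Itv q k l, y (i (σ t)) (K' t)) := by
        refine Finset.sum_congr rfl fun σ _ => ?_
        rw [sum_swap_helper, Finset.mul_sum]
        exact Finset.sum_congr rfl fun m _ => by ring
    _ = ∑ m ∈ s, ∑ σ ∈ Fixσ q k, c m * (((Equiv.Perm.sign σ : ℤ) : ℝ) *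
          ∑ K' ∈ AgreeK q M k l K, G m K' (i ∘ σ) * ∏ t ∈ Itv q k l, y (i (σ t)) (K' t)) :=
        Finset.sum_comm
    _ = ∑ m ∈ s, c m * T q n M y k l (G m) K i := by
        refine Finset.sum_congr rfl fun m _ => ?_
        rw [T, Finset.mul_sum]


lemma mem_AgreeK {q M k l : ℕ} {K K' : Fin q → Fin M} :
    K' ∈ AgreeK q M k l K ↔ ∀ t : Fin q, ((t : ℕ) < k ∨ l ≤ (t : ℕ)) → K' t = K t := by
  simp [AgreeK]

lemma mem_Fixσ {q k : ℕ} {σ : Equiv.Perm (Fin q)} :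
    σ ∈ Fixσ q k ↔ ∀ t : Fin q, (t : ℕ) < k → σ t = t := by
  simp [Fixσ]

lemma mem_Itv {q k l : ℕ} {t : Fin q} :
    t ∈ Itv q k l ↔ k ≤ (t : ℕ) ∧ (t : ℕ) < l := by
  simp [Itv]

lemma Itv_union (q k l m : ℕ) (hkl : k ≤ l) (hlm : l ≤ m) :
    Itv q k l ∪ Itv q l m = Itv q k m := by
  ext t
  simp only [Finset.mem_union, mem_Itv]
  omega

lemma Itv_disjoint (q k l m : ℕ) : Disjoint (Itv q k l) (Itv q l m) := by
  rw [Finset.disjoint_left]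
  intro t h1 h2
  rw [mem_Itv] at h1 h2
  omega

lemma sum_AgreeK_comp (q M k l m : ℕ) (hkl : k ≤ l) (hlm : l ≤ m) (K : Fin q → Fin M)
    (g : (Fin q → Fin M) → ℝ) :
    ∑ K' ∈ AgreeK q M k l K, ∑ K'' ∈ AgreeK q M l m K', g K''
      = ∑ K'' ∈ AgreeK q M k m K, g K'' := by
  rw [Finset.sum_sigma' (AgreeK q M k l K) (fun K' => AgreeK q M l m K') (fun _ K'' => g K'')]
  refine Finset.sum_nbij' (fun p => p.2)
    (fun K'' => ⟨fun t : Fin q => if (t : ℕ) < k ∨ l ≤ (t : ℕ) then K t else K'' t, K''⟩)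
    ?_ ?_ ?_ ?_ ?_
  · rintro ⟨K', K''⟩ hp
    obtain ⟨h1, h2⟩ := Finset.mem_sigma.mp hp
    rw [mem_AgreeK] at h1 h2
    dsimp only at h1 h2 ⊢
    rw [mem_AgreeK]
    intro t ht
    rcases ht with ht | ht
    · rw [h2 t (Or.inl (by omega)), h1 t (Or.inl ht)]
    · rw [h2 t (Or.inr ht), h1 t (Or.inr (by omega))]
  · intro K'' h
    rw [mem_AgreeK] at h
    rw [Finset.mem_sigma]
    refine ⟨?_, ?_⟩ <;> rw [mem_AgreeK] <;> dsimp only <;> intro t ht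
    · rw [if_pos ht]
    · rcases ht with ht | ht
      · by_cases hc : (t : ℕ) < k ∨ l ≤ (t : ℕ)
        · rw [if_pos hc]
          rcases hc with hc | hc
          · exact h t (Or.inl hc)
          · omega
        · rw [if_neg hc]
      · rw [if_pos (Or.inr (by omega))]
        exact h t (Or.inr (by omega))
  · rintro ⟨K', K''⟩ hp
    obtain ⟨h1, h2⟩ := Finset.mem_sigma.mp hp
    rw [mem_AgreeK] at h1 h2
    dsimp only at h1 h2 ⊢
    have he : (fun t : Fin q => if (t : ℕ) < k ∨ l ≤ (t : ℕ) then K t else K'' t) = K' := by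
      funext t
      by_cases hc : (t : ℕ) < k ∨ l ≤ (t : ℕ)
      · rw [if_pos hc, h1 t hc]
      · rw [if_neg hc]
        exact h2 t (Or.inl (by omega))
    rw [Sigma.mk.inj_iff]
    exact ⟨he, heq_of_eq rfl⟩
  · intro K'' _
    rfl
  · intro p _
    rfl


lemma sum_swap_helper' {α β : Type*} (A : Finset α) (s : Finset β) (g : β → α → ℝ)
    (p : α → ℝ) :
    ∑ a ∈ A, (∑ b ∈ s, g b a) * p a = ∑ b ∈ s, ∑ a ∈ A, g b a * p a := by
  calc ∑ a ∈ A, (∑ b ∈ s, g b a) * p a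
      = ∑ a ∈ A, ∑ b ∈ s, g b a * p a := by
        refine Finset.sum_congr rfl fun a _ => Finset.sum_mul ..
    _ = ∑ b ∈ s, ∑ a ∈ A, g b a * p a := Finset.sum_comm

lemma sgn_mul_cast {q : ℕ} (σ τ : Equiv.Perm (Fin q)) :
    ((Equiv.Perm.sign (σ * τ) : ℤ) : ℝ)
      = ((Equiv.Perm.sign σ : ℤ) : ℝ) * ((Equiv.Perm.sign τ : ℤ) : ℝ) := by
  rw [Equiv.Perm.sign_mul, Units.val_mul, Int.cast_mul]

lemma T_comp (q n M : ℕ) (y : Fin n → Fin M → ℝ) (k l m : ℕ)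
    (hkl : k ≤ l) (hlm : l ≤ m) (hlq : l ≤ q)
    (F : (Fin q → Fin M) → (Fin q → Fin n) → ℝ)
    (K : Fin q → Fin M) (i : Fin q → Fin n) :
    T q n M y k l (fun K' j => T q n M y l m F K' j) K i
      = ((q - l).factorial : ℝ) * T q n M y k m F K i := by
  set h : Equiv.Perm (Fin q) → ℝ := fun ρ => ((Equiv.Perm.sign ρ : ℤ) : ℝ) *
    ∑ K'' ∈ AgreeK q M k m K, F K'' (i ∘ ρ) * ∏ t ∈ Itv q k m, y (i (ρ t)) (K'' t)
    with hh
  have main : T q n M y k l (fun K' j => T q n M y l m F K' j) K i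
      = ∑ σ ∈ Fixσ q k, ∑ τ ∈ Fixσ q l, h (σ * τ) := by
    rw [T]
    refine Finset.sum_congr rfl fun σ hσ => ?_
    rw [mem_Fixσ] at hσ
    simp only [T]
    rw [sum_swap_helper' (AgreeK q M k l K) (Fixσ q l)
      (fun τ K' => ((Equiv.Perm.sign τ : ℤ) : ℝ) *
        ∑ K'' ∈ AgreeK q M l m K', F K'' ((i ∘ σ) ∘ τ) *
          ∏ t ∈ Itv q l m, y ((i ∘ σ) (τ t)) (K'' t))
      (fun K' => ∏ t ∈ Itv q k l, y (i (σ t)) (K' t)), Finset.mul_sum]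
    refine Finset.sum_congr rfl fun τ hτ => ?_
    rw [mem_Fixσ] at hτ
    have step1 : ∀ K' ∈ AgreeK q M k l K,
        (((Equiv.Perm.sign τ : ℤ) : ℝ) *
          ∑ K'' ∈ AgreeK q M l m K', F K'' ((i ∘ σ) ∘ τ) *
            ∏ t ∈ Itv q l m, y ((i ∘ σ) (τ t)) (K'' t)) *
          ∏ t ∈ Itv q k l, y (i (σ t)) (K' t)
        = ∑ K'' ∈ AgreeK q M l m K', ((Equiv.Perm.sign τ : ℤ) : ℝ) *
            (F K'' ((i ∘ σ) ∘ τ) * ((∏ t ∈ Itv q l m, y ((i ∘ σ) (τ t)) (K'' t)) *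
              ∏ t ∈ Itv q k l, y (i (σ t)) (K'' t))) := by
      intro K' _
      rw [mul_assoc, Finset.sum_mul, Finset.mul_sum]
      refine Finset.sum_congr rfl fun K'' hK'' => ?_
      rw [mem_AgreeK] at hK''
      have hP : ∏ t ∈ Itv q k l, y (i (σ t)) (K' t)
          = ∏ t ∈ Itv q k l, y (i (σ t)) (K'' t) := by
        refine Finset.prod_congr rfl fun t ht => ?_
        rw [mem_Itv] at ht
        rw [hK'' t (Or.inl (by omega))]
      rw [hP]
      ring
    rw [Finset.sum_congr rfl step1, sum_AgreeK_comp q M k l m hkl hlm K]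
    rw [hh]
    dsimp only
    rw [Finset.mul_sum, Finset.mul_sum]
    refine Finset.sum_congr rfl fun K'' _ => ?_
    have hcomp : (i ∘ σ) ∘ τ = i ∘ ⇑(σ * τ) := by
      funext x
      simp [Equiv.Perm.mul_apply]
    have hprod : (∏ t ∈ Itv q l m, y ((i ∘ σ) (τ t)) (K'' t)) *
        ∏ t ∈ Itv q k l, y (i (σ t)) (K'' t)
        = ∏ t ∈ Itv q k m, y (i ((σ * τ) t)) (K'' t) := by
      have h1 : ∏ t ∈ Itv q l m, y ((i ∘ σ) (τ t)) (K'' t)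
          = ∏ t ∈ Itv q l m, y (i ((σ * τ) t)) (K'' t) := by
        refine Finset.prod_congr rfl fun t _ => rfl
      have h2 : ∏ t ∈ Itv q k l, y (i (σ t)) (K'' t)
          = ∏ t ∈ Itv q k l, y (i ((σ * τ) t)) (K'' t) := by
        refine Finset.prod_congr rfl fun t ht => ?_
        rw [mem_Itv] at ht
        rw [Equiv.Perm.mul_apply, hτ t (by omega)]
      rw [h1, h2, mul_comm, ← Finset.prod_union (Itv_disjoint q k l m),
        Itv_union q k l m hkl hlm]
    rw [sgn_mul_cast, hcomp, ← hprod]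
    ring
  rw [main]
  rw [Finset.sum_comm]
  have inner : ∀ τ ∈ Fixσ q l, ∑ σ ∈ Fixσ q k, h (σ * τ) = ∑ ρ ∈ Fixσ q k, h ρ := by
    intro τ hτ
    rw [mem_Fixσ] at hτ
    refine Finset.sum_nbij' (fun σ => σ * τ) (fun ρ => ρ * τ⁻¹) ?_ ?_ ?_ ?_ ?_
    · intro σ hσ
      rw [mem_Fixσ] at hσ ⊢
      intro t ht
      rw [Equiv.Perm.mul_apply, hτ t (by omega), hσ t ht]
    · intro ρ hρ
      rw [mem_Fixσ] at hρ ⊢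
      intro t ht
      have htt : τ⁻¹ t = t := Equiv.Perm.inv_eq_iff_eq.mpr (hτ t (by omega)).symm
      rw [Equiv.Perm.mul_apply, htt, hρ t ht]
    · intro σ _
      group
    · intro ρ _
      group
    · intro σ _
      rfl
  rw [Finset.sum_congr rfl inner, Finset.sum_const, card_Fixσ q l hlq, nsmul_eq_mul]
  rfl


lemma binom_alt (q k m : ℕ) (hkm : k < m) (hmq : m ≤ q) :
    ∑ l ∈ Icc k m, (-1 : ℝ) ^ (m - l) * (((q - k).choose (q - l) : ℕ) : ℝ) *
      (((q - l).choose (q - m) : ℕ) : ℝ) = 0 := by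
  have key : ∀ l ∈ Icc k m, (-1 : ℝ) ^ (m - l) * (((q - k).choose (q - l) : ℕ) : ℝ) *
      (((q - l).choose (q - m) : ℕ) : ℝ)
      = (((q - k).choose (q - m) : ℕ) : ℝ) *
        ((-1 : ℝ) ^ (m - l) * (((m - k).choose (m - l) : ℕ) : ℝ)) := by
    intro l hl
    rw [Finset.mem_Icc] at hl
    have h1 : (q - k).choose (q - l) * (q - l).choose (q - m)
        = (q - k).choose (q - m) * ((m - k).choose (m - l)) := by
      have h2 := Nat.choose_mul (n := q - k) (k := q - l) (s := q - m) (by omega)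
      rw [h2]
      congr 2 <;> omega
    have h3 : (((q - k).choose (q - l) : ℕ) : ℝ) * (((q - l).choose (q - m) : ℕ) : ℝ)
        = (((q - k).choose (q - m) : ℕ) : ℝ) * (((m - k).choose (m - l) : ℕ) : ℝ) := by
      exact_mod_cast congrArg (Nat.cast (R := ℝ)) h1
    rw [mul_assoc, h3]
    ring
  rw [Finset.sum_congr rfl key, ← Finset.mul_sum]
  have hz : ∑ l ∈ Icc k m, (-1 : ℝ) ^ (m - l) * (((m - k).choose (m - l) : ℕ) : ℝ) = 0 := by
    have hre : ∑ l ∈ Icc k m, (-1 : ℝ) ^ (m - l) * (((m - k).choose (m - l) : ℕ) : ℝ)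
        = ∑ j ∈ range (m - k + 1), (-1 : ℝ) ^ j * (((m - k).choose j : ℕ) : ℝ) := by
      refine Finset.sum_nbij' (fun l => m - l) (fun j => m - j) ?_ ?_ ?_ ?_ ?_
      · intro l hl; rw [Finset.mem_Icc] at hl; rw [Finset.mem_range]; omega
      · intro j hj; rw [Finset.mem_range] at hj; rw [Finset.mem_Icc]; omega
      · intro l hl; rw [Finset.mem_Icc] at hl; omega
      · intro j hj; rw [Finset.mem_range] at hj; omega
      · intro l _; rfl
    rw [hre]
    have hint := Int.alternating_sum_range_choose_of_ne (n := m - k) (by omega)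
    calc ∑ j ∈ range (m - k + 1), (-1 : ℝ) ^ j * (((m - k).choose j : ℕ) : ℝ)
        = ((∑ j ∈ range (m - k + 1), (-1 : ℤ) ^ j * ((m - k).choose j : ℤ) : ℤ) : ℝ) := by
          push_cast
          rfl
      _ = 0 := by rw [hint]; norm_num
  rw [hz, mul_zero]

lemma sum_Icc_swap (a b : ℕ) (g : ℕ → ℕ → ℝ) :
    ∑ l ∈ Icc a b, ∑ m ∈ Icc l b, g l m = ∑ m ∈ Icc a b, ∑ l ∈ Icc a m, g l m := by
  rw [Finset.sum_sigma' (Icc a b) (fun l => Icc l b) (fun l m => g l m),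
    Finset.sum_sigma' (Icc a b) (fun m => Icc a m) (fun m l => g l m)]
  refine Finset.sum_nbij' (fun p => ⟨p.2, p.1⟩) (fun p => ⟨p.2, p.1⟩) ?_ ?_ ?_ ?_ ?_
  · rintro ⟨l, m⟩ hp
    obtain ⟨h1, h2⟩ := Finset.mem_sigma.mp hp
    rw [Finset.mem_Icc] at h1 h2
    dsimp only at h1 h2
    rw [Finset.mem_sigma, Finset.mem_Icc, Finset.mem_Icc]
    dsimp only
    omega
  · rintro ⟨m, l⟩ hp
    obtain ⟨h1, h2⟩ := Finset.mem_sigma.mp hp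
    rw [Finset.mem_Icc] at h1 h2
    dsimp only at h1 h2
    rw [Finset.mem_sigma, Finset.mem_Icc, Finset.mem_Icc]
    dsimp only
    omega
  · rintro ⟨l, m⟩ _; rfl
  · rintro ⟨m, l⟩ _; rfl
  · rintro ⟨l, m⟩ _; rfl

lemma Icc_split (a b : ℕ) (h : a ≤ b) : Icc a b = insert a (Icc (a + 1) b) := by
  ext x
  simp only [Finset.mem_Icc, Finset.mem_insert]
  omega

lemma not_mem_Icc_succ (a b : ℕ) : a ∉ Icc (a + 1) b := by
  rw [Finset.mem_Icc]
  omega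

end CCIaux

/-- Lemma 2.8: inversion of the contact-decomposition coefficient relations.
The families `A_k, B_k : (K₁,…,K_q ; i₁,…,i_q) → ℝ` (where `A k`/`B k` use the `K`-indices at
positions `< k` and the `i`-indices at positions `≥ k`) are skew-symmetric in those index
groups, and are related by
`B_k = ∑_{l=k}^q C(q−k, q−l) · Alt_{i} [ A_l · y_{i_{k+1}}^{K_{k+1}} ⋯ y_{i_l}^{K_l} ]`
(the `K`-indices in positions `k,…,l−1` being summed against the velocities `y`).  Then the
system inverts to the same relation with `A` and `B` interchanged and signs `(−1)^{l−k}`. -/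
theorem contact_coefficients_inversion
    (q n M : ℕ) (y : Fin n → Fin M → ℝ)
    (A B : ℕ → (Fin q → Fin M) → (Fin q → Fin n) → ℝ)
    (hAskewK : ∀ k ≤ q, ∀ (K : Fin q → Fin M) (i : Fin q → Fin n) (σ : Equiv.Perm (Fin q)),
      (∀ t : Fin q, k ≤ (t : ℕ) → σ t = t) →
        A k (K ∘ σ) i = ((Equiv.Perm.sign σ : ℤ) : ℝ) * A k K i)
    (hAskewI : ∀ k ≤ q, ∀ (K : Fin q → Fin M) (i : Fin q → Fin n) (σ : Equiv.Perm (Fin q)),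
      (∀ t : Fin q, (t : ℕ) < k → σ t = t) →
        A k K (i ∘ σ) = ((Equiv.Perm.sign σ : ℤ) : ℝ) * A k K i)
    (hBskewK : ∀ k ≤ q, ∀ (K : Fin q → Fin M) (i : Fin q → Fin n) (σ : Equiv.Perm (Fin q)),
      (∀ t : Fin q, k ≤ (t : ℕ) → σ t = t) →
        B k (K ∘ σ) i = ((Equiv.Perm.sign σ : ℤ) : ℝ) * B k K i)
    (hBskewI : ∀ k ≤ q, ∀ (K : Fin q → Fin M) (i : Fin q → Fin n) (σ : Equiv.Perm (Fin q)),
      (∀ t : Fin q, (t : ℕ) < k → σ t = t) →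
        B k K (i ∘ σ) = ((Equiv.Perm.sign σ : ℤ) : ℝ) * B k K i)
    (hrel : ∀ k ≤ q, ∀ (K : Fin q → Fin M) (i : Fin q → Fin n),
      B k K i = ∑ l ∈ Icc k q, (((q - k).choose (q - l) : ℕ) : ℝ) *
        (((q - k).factorial : ℕ) : ℝ)⁻¹ *
          ∑ σ ∈ univ.filter (fun σ : Equiv.Perm (Fin q) =>
              ∀ t : Fin q, (t : ℕ) < k → σ t = t),
            ((Equiv.Perm.sign σ : ℤ) : ℝ) *
              ∑ K' ∈ univ.filter (fun K' : Fin q → Fin M =>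
                  ∀ t : Fin q, ((t : ℕ) < k ∨ l ≤ (t : ℕ)) → K' t = K t),
                A l K' (i ∘ σ) *
                  ∏ t ∈ univ.filter (fun t : Fin q => k ≤ (t : ℕ) ∧ (t : ℕ) < l),
                    y (i (σ t)) (K' t)) :
    ∀ k ≤ q, ∀ (K : Fin q → Fin M) (i : Fin q → Fin n),
      A k K i = ∑ l ∈ Icc k q, (-1 : ℝ) ^ (l - k) *
        (((q - k).choose (q - l) : ℕ) : ℝ) * (((q - k).factorial : ℕ) : ℝ)⁻¹ *
          ∑ σ ∈ univ.filter (fun σ : Equiv.Perm (Fin q) =>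
              ∀ t : Fin q, (t : ℕ) < k → σ t = t),
            ((Equiv.Perm.sign σ : ℤ) : ℝ) *
              ∑ K' ∈ univ.filter (fun K' : Fin q → Fin M =>
                  ∀ t : Fin q, ((t : ℕ) < k ∨ l ≤ (t : ℕ)) → K' t = K t),
                B l K' (i ∘ σ) *
                  ∏ t ∈ univ.filter (fun t : Fin q => k ≤ (t : ℕ) ∧ (t : ℕ) < l),
                    y (i (σ t)) (K' t) := by
  have hrel' : ∀ k, k ≤ q → ∀ (K : Fin q → Fin M) (i : Fin q → Fin n),
      B k K i = ∑ l ∈ Icc k q, (((q - k).choose (q - l) : ℕ) : ℝ) *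
        (((q - k).factorial : ℕ) : ℝ)⁻¹ * CCIaux.T q n M y k l (A l) K i := by
    intro k hk K i
    rw [hrel k hk K i]
    rfl
  have key : ∀ d k, k ≤ q → q - k = d → ∀ (K : Fin q → Fin M) (i : Fin q → Fin n),
      A k K i = ∑ l ∈ Icc k q, (-1 : ℝ) ^ (l - k) * (((q - k).choose (q - l) : ℕ) : ℝ) *
        (((q - k).factorial : ℕ) : ℝ)⁻¹ * CCIaux.T q n M y k l (B l) K i := by
    intro d
    induction d using Nat.strong_induction_on with
    | _ d ih =>
    intro k hk hd K i
    have IH : ∀ l, k < l → l ≤ q → ∀ (K' : Fin q → Fin M) (j : Fin q → Fin n),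
        A l K' j = ∑ m ∈ Icc l q, (-1 : ℝ) ^ (m - l) * (((q - l).choose (q - m) : ℕ) : ℝ) *
          (((q - l).factorial : ℕ) : ℝ)⁻¹ * CCIaux.T q n M y l m (B m) K' j :=
      fun l h1 h2 K' j => ih (q - l) (by omega) l h2 rfl K' j
    have hfk : (((q - k).factorial : ℕ) : ℝ) ≠ 0 :=
      Nat.cast_ne_zero.mpr (Nat.factorial_ne_zero _)
    have e0 : B k K i = A k K i + ∑ l ∈ Icc (k + 1) q, (((q - k).choose (q - l) : ℕ) : ℝ) *
        (((q - k).factorial : ℕ) : ℝ)⁻¹ * CCIaux.T q n M y k l (A l) K i := by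
      rw [hrel' k hk K i, CCIaux.Icc_split k q hk,
        Finset.sum_insert (CCIaux.not_mem_Icc_succ k q)]
      congr 1
      rw [CCIaux.T_diag q n M y k (A k) (fun K' j σ hσ => hAskewI k hk K' j σ hσ) K i hk,
        Nat.choose_self, Nat.cast_one, one_mul]
      exact inv_mul_cancel_left₀ hfk _
    have e1 : ∀ l ∈ Icc (k + 1) q, CCIaux.T q n M y k l (A l) K i
        = ∑ m ∈ Icc l q, ((-1 : ℝ) ^ (m - l) * (((q - l).choose (q - m) : ℕ) : ℝ)) *
            CCIaux.T q n M y k m (B m) K i := by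
      intro l hl
      rw [Finset.mem_Icc] at hl
      have hfl : (((q - l).factorial : ℕ) : ℝ) ≠ 0 :=
        Nat.cast_ne_zero.mpr (Nat.factorial_ne_zero _)
      have hA : A l = fun K' j => ∑ m ∈ Icc l q,
          ((-1 : ℝ) ^ (m - l) * (((q - l).choose (q - m) : ℕ) : ℝ) *
            (((q - l).factorial : ℕ) : ℝ)⁻¹) * CCIaux.T q n M y l m (B m) K' j := by
        funext K' j
        rw [IH l (by omega) hl.2 K' j]
      calc CCIaux.T q n M y k l (A l) K i
          = ∑ m ∈ Icc l q, ((-1 : ℝ) ^ (m - l) * (((q - l).choose (q - m) : ℕ) : ℝ) *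
              (((q - l).factorial : ℕ) : ℝ)⁻¹) *
                CCIaux.T q n M y k l (fun K' j => CCIaux.T q n M y l m (B m) K' j) K i := by
            rw [hA]
            exact CCIaux.T_sum q n M y k l (Icc l q)
              (fun m => (-1 : ℝ) ^ (m - l) * (((q - l).choose (q - m) : ℕ) : ℝ) *
                (((q - l).factorial : ℕ) : ℝ)⁻¹)
              (fun m K' j => CCIaux.T q n M y l m (B m) K' j) K i
        _ = ∑ m ∈ Icc l q, ((-1 : ℝ) ^ (m - l) * (((q - l).choose (q - m) : ℕ) : ℝ)) *
              CCIaux.T q n M y k m (B m) K i := by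
            refine Finset.sum_congr rfl fun m hm => ?_
            rw [Finset.mem_Icc] at hm
            rw [CCIaux.T_comp q n M y k l m (by omega) hm.1 hl.2 (B m) K i]
            field_simp
    have e2 : ∑ l ∈ Icc (k + 1) q, (((q - k).choose (q - l) : ℕ) : ℝ) *
        (((q - k).factorial : ℕ) : ℝ)⁻¹ * CCIaux.T q n M y k l (A l) K i
        = ∑ m ∈ Icc (k + 1) q, (∑ l ∈ Icc (k + 1) m, (-1 : ℝ) ^ (m - l) *
            (((q - k).choose (q - l) : ℕ) : ℝ) * (((q - l).choose (q - m) : ℕ) : ℝ)) *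
          ((((q - k).factorial : ℕ) : ℝ)⁻¹ * CCIaux.T q n M y k m (B m) K i) := by
      calc ∑ l ∈ Icc (k + 1) q, (((q - k).choose (q - l) : ℕ) : ℝ) *
            (((q - k).factorial : ℕ) : ℝ)⁻¹ * CCIaux.T q n M y k l (A l) K i
          = ∑ l ∈ Icc (k + 1) q, ∑ m ∈ Icc l q, ((-1 : ℝ) ^ (m - l) *
              (((q - k).choose (q - l) : ℕ) : ℝ) * (((q - l).choose (q - m) : ℕ) : ℝ)) *
                ((((q - k).factorial : ℕ) : ℝ)⁻¹ * CCIaux.T q n M y k m (B m) K i) := by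
            refine Finset.sum_congr rfl fun l hl => ?_
            rw [e1 l hl, Finset.mul_sum]
            exact Finset.sum_congr rfl fun m _ => by ring
        _ = ∑ m ∈ Icc (k + 1) q, ∑ l ∈ Icc (k + 1) m, ((-1 : ℝ) ^ (m - l) *
              (((q - k).choose (q - l) : ℕ) : ℝ) * (((q - l).choose (q - m) : ℕ) : ℝ)) *
                ((((q - k).factorial : ℕ) : ℝ)⁻¹ * CCIaux.T q n M y k m (B m) K i) :=
            CCIaux.sum_Icc_swap (k + 1) q _
        _ = _ := by
            refine Finset.sum_congr rfl fun m _ => ?_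
            rw [Finset.sum_mul]
    have e3 : ∀ m ∈ Icc (k + 1) q, ∑ l ∈ Icc (k + 1) m, (-1 : ℝ) ^ (m - l) *
        (((q - k).choose (q - l) : ℕ) : ℝ) * (((q - l).choose (q - m) : ℕ) : ℝ)
        = -((-1 : ℝ) ^ (m - k) * (((q - k).choose (q - m) : ℕ) : ℝ)) := by
      intro m hm
      rw [Finset.mem_Icc] at hm
      have h0 := CCIaux.binom_alt q k m (by omega) hm.2
      rw [CCIaux.Icc_split k m (by omega), Finset.sum_insert (CCIaux.not_mem_Icc_succ k m),
        Nat.choose_self, Nat.cast_one, mul_one] at h0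
      linarith
    have e4 : ∑ l ∈ Icc (k + 1) q, (((q - k).choose (q - l) : ℕ) : ℝ) *
        (((q - k).factorial : ℕ) : ℝ)⁻¹ * CCIaux.T q n M y k l (A l) K i
        = -∑ l ∈ Icc (k + 1) q, (-1 : ℝ) ^ (l - k) *
            (((q - k).choose (q - l) : ℕ) : ℝ) * (((q - k).factorial : ℕ) : ℝ)⁻¹ *
              CCIaux.T q n M y k l (B l) K i := by
      rw [e2, ← Finset.sum_neg_distrib]
      refine Finset.sum_congr rfl fun m hm => ?_
      rw [e3 m hm]
      ring
    have target_split : ∑ l ∈ Icc k q, (-1 : ℝ) ^ (l - k) *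
        (((q - k).choose (q - l) : ℕ) : ℝ) * (((q - k).factorial : ℕ) : ℝ)⁻¹ *
          CCIaux.T q n M y k l (B l) K i
        = B k K i + ∑ l ∈ Icc (k + 1) q, (-1 : ℝ) ^ (l - k) *
            (((q - k).choose (q - l) : ℕ) : ℝ) * (((q - k).factorial : ℕ) : ℝ)⁻¹ *
              CCIaux.T q n M y k l (B l) K i := by
      rw [CCIaux.Icc_split k q hk, Finset.sum_insert (CCIaux.not_mem_Icc_succ k q)]
      congr 1
      rw [Nat.sub_self, pow_zero, Nat.choose_self, Nat.cast_one, one_mul, one_mul,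
        CCIaux.T_diag q n M y k (B k) (fun K' j σ hσ => hBskewI k hk K' j σ hσ) K i hk]
      exact inv_mul_cancel_left₀ hfk _
    rw [target_split]
    linarith [e0, e4]
  intro k hk K i
  exact key (q - k) k hk rfl K i
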